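/- A separating bijection need not have separating inverse in infinite dimensions: the map T : AC([0,1], c₀) → AC([0,1] ∪ [2,3], c₀) defined by Tf(x) = (λ₁, λ₃, λ₅, ...) and Tf(2+x) = (λ₂, λ₄, λ₆, ...) for x ∈ [0,1], where f(x) = (λ₁, λ₂, λ₃, ...), is a linear, bijective, separating, continuous map whose inverse T⁻¹ is not separating. -/

import Mathlib

open Set

def AbsCont {E : Type*} [NormedAddCommGroup E] {X : Set ℝ} (f : X → E) : Prop :=
  ∀ ε > (0 : ℝ), ∃ δ > (0 : ℝ), ∀ n : ℕ, ∀ a b : Fin n → X,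
    (∀ i, (a i : ℝ) < b i) →
    (∀ i j, i ≠ j → Disjoint (Set.Ioo (a i : ℝ) (b i)) (Set.Ioo (a j : ℝ) (b j))) →
    (∑ i, ((b i : ℝ) - a i)) < δ →
    (∑ i, ‖f (b i) - f (a i)‖) < ε

def PartSums {E : Type*} [NormedAddCommGroup E] {X : Set ℝ} (f : X → E) : Set ℝ :=
  {s | ∃ n : ℕ, ∃ x : Fin (n + 1) → X, StrictMono (fun i => (x i : ℝ)) ∧
    s = ∑ i : Fin n, ‖f (x i.succ) - f (x i.castSucc)‖}

noncomputable def var {E : Type*} [NormedAddCommGroup E] {X : Set ℝ} (f : X → E) : ℝ :=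
  sSup (PartSums f)

/-- The supremum norm of `f` on `X`. -/
noncomputable def supNorm {E : Type*} [NormedAddCommGroup E] {X : Set ℝ} (f : X → E) : ℝ :=
  sSup {r | ∃ x : X, r = ‖f x‖}

/-- The AC norm `‖f‖_AC = ‖f‖_∞ + V(f;X)`. -/
noncomputable def ACnorm {E : Type*} [NormedAddCommGroup E] {X : Set ℝ} (f : X → E) : ℝ :=
  supNorm f + var f
/-- `T` is separating on absolutely continuous functions: disjoint cozero sets are
mapped to disjoint cozero sets. -/
def Separating {E F : Type*} [NormedAddCommGroup E] [NormedAddCommGroup F]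
    {X Y : Set ℝ} (T : (X → E) → (Y → F)) : Prop :=
  ∀ f g : X → E, AbsCont f → AbsCont g → (∀ x, f x = 0 ∨ g x = 0) →
    ∀ y, T f y = 0 ∨ T g y = 0

open Filter

noncomputable section Helpers

abbrev E0 := ZeroAtInftyContinuousMap ℕ ℝ

lemma coord_le (g : E0) (k : ℕ) : ‖g k‖ ≤ ‖g‖ := by
  rw [← ZeroAtInftyContinuousMap.norm_toBCF_eq_norm]
  exact g.toBCF.norm_coe_le_norm k

lemma norm_le_of (g : E0) {C : ℝ} (hC : 0 ≤ C) (h : ∀ k, ‖g k‖ ≤ C) : ‖g‖ ≤ C := by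
  rw [← ZeroAtInftyContinuousMap.norm_toBCF_eq_norm]
  exact (BoundedContinuousFunction.norm_le hC).2 h

/-- interleave two c₀ sequences -/
def interleave (u v : E0) : E0 :=
  { toFun := fun n => if Even n then u (n / 2) else v (n / 2)
    continuous_toFun := continuous_of_discreteTopology
    zero_at_infty' := by
      rw [cocompact_eq_atTop (α := ℕ)]
      have hdiv : Tendsto (fun n : ℕ => n / 2) atTop atTop := by
        apply Filter.tendsto_atTop_atTop.2
        intro b
        exact ⟨2 * b, fun n hn => Nat.le_div_iff_mul_le (by norm_num) |>.2 (by omega)⟩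
      have hu : Tendsto (fun n : ℕ => ‖u (n / 2)‖) atTop (nhds 0) := by
        have := u.zero_at_infty'
        rw [cocompact_eq_atTop (α := ℕ)] at this
        simpa [Function.comp_def] using ((continuous_norm.tendsto 0).comp this).comp hdiv
      have hv : Tendsto (fun n : ℕ => ‖v (n / 2)‖) atTop (nhds 0) := by
        have := v.zero_at_infty'
        rw [cocompact_eq_atTop (α := ℕ)] at this
        simpa [Function.comp_def] using ((continuous_norm.tendsto 0).comp this).comp hdiv
      refine squeeze_zero_norm (a := fun n : ℕ => ‖u (n/2)‖ + ‖v (n/2)‖) ?_ (by simpa using hu.add hv)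
      intro n
      by_cases h : Even n <;> simp only [h, if_true, if_false, Real.norm_eq_abs]
      · exact le_add_of_nonneg_right (abs_nonneg _)
      · exact le_add_of_nonneg_left (abs_nonneg _) }

@[simp] lemma interleave_even (u v : E0) (k : ℕ) : interleave u v (2 * k) = u k := by
  have h1 : Even (2 * k) := even_two_mul k
  have h2 : 2 * k / 2 = k := by omega
  simp [interleave, h1, h2, ZeroAtInftyContinuousMap.coe_mk]

@[simp] lemma interleave_odd (u v : E0) (k : ℕ) : interleave u v (2 * k + 1) = v k := by
  have h1 : ¬ Even (2 * k + 1) := by simp [Nat.even_add_one, parity_simps]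
  have h2 : (2 * k + 1) / 2 = k := by omega
  simp [interleave, h1, h2]

/-- the indicator sequence e_i -/
def eseq (i : ℕ) : E0 :=
  { toFun := fun n => if n = i then 1 else 0
    continuous_toFun := continuous_of_discreteTopology
    zero_at_infty' := by
      rw [cocompact_eq_atTop (α := ℕ)]
      apply Tendsto.congr' _ tendsto_const_nhds
      filter_upwards [eventually_gt_atTop i] with n hn
      simp [Nat.ne_of_gt hn |>.symm, hn.ne']
      }

@[simp] lemma eseq_apply (i n : ℕ) : eseq i n = if n = i then 1 else 0 := rfl

lemma eseq_ne_zero (i : ℕ) : eseq i ≠ 0 := by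
  intro h
  have : eseq i i = 0 := by rw [h]; rfl
  simp at this

end Helpers

section Tfacts
open Set ZeroAtInftyContinuousMap

/-- The hypothesis on `T`, matching the theorem statement verbatim. -/
def HypT (T : ((Set.Icc (0:ℝ) 1) → ZeroAtInftyContinuousMap ℕ ℝ) →
        ((Set.Icc (0:ℝ) 1 ∪ Set.Icc (2:ℝ) 3 : Set ℝ) → ZeroAtInftyContinuousMap ℕ ℝ)) : Prop :=
  ∀ (f : (Set.Icc (0:ℝ) 1) → ZeroAtInftyContinuousMap ℕ ℝ)
      (x : ℝ) (hx : x ∈ Set.Icc (0:ℝ) 1),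
    (∀ k : ℕ, T f ⟨x, Set.mem_union_left _ hx⟩ k = f ⟨x, hx⟩ (2 * k)) ∧
    (∀ k : ℕ, T f ⟨x + 2, Set.mem_union_right _
        ⟨by linarith [hx.1], by linarith [hx.2]⟩⟩ k = f ⟨x, hx⟩ (2 * k + 1))

variable {T : ((Set.Icc (0:ℝ) 1) → ZeroAtInftyContinuousMap ℕ ℝ) →
        ((Set.Icc (0:ℝ) 1 ∪ Set.Icc (2:ℝ) 3 : Set ℝ) → ZeroAtInftyContinuousMap ℕ ℝ)}

lemma mem_low {y : ℝ} (hy : y ∈ Set.Icc (0:ℝ) 1 ∪ Set.Icc (2:ℝ) 3) (h : y ≤ 1) :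
    y ∈ Set.Icc (0:ℝ) 1 := by
  rcases hy with hy | hy
  · exact hy
  · exact absurd h (by push_neg; linarith [hy.1])

lemma mem_high {y : ℝ} (hy : y ∈ Set.Icc (0:ℝ) 1 ∪ Set.Icc (2:ℝ) 3) (h : ¬ y ≤ 1) :
    y - 2 ∈ Set.Icc (0:ℝ) 1 := by
  rcases hy with hy | hy
  · exact absurd hy.2 h
  · exact ⟨by linarith [hy.1], by linarith [hy.2]⟩

lemma mem_shift {x : ℝ} (hx : x ∈ Set.Icc (0:ℝ) 1) :
    x + 2 ∈ Set.Icc (0:ℝ) 1 ∪ Set.Icc (2:ℝ) 3 :=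
  Set.mem_union_right _ ⟨by linarith [hx.1], by linarith [hx.2]⟩

lemma Tlow (hT : HypT T) (f) (y : (Set.Icc (0:ℝ) 1 ∪ Set.Icc (2:ℝ) 3 : Set ℝ))
    (hy : (y:ℝ) ∈ Set.Icc (0:ℝ) 1) (k : ℕ) : T f y k = f ⟨y, hy⟩ (2 * k) := by
  have h := (hT f y hy).1 k
  rwa [show (⟨(y:ℝ), Set.mem_union_left _ hy⟩ :
      (Set.Icc (0:ℝ) 1 ∪ Set.Icc (2:ℝ) 3 : Set ℝ)) = y from Subtype.ext rfl] at h

lemma Thigh (hT : HypT T) (f) (y : (Set.Icc (0:ℝ) 1 ∪ Set.Icc (2:ℝ) 3 : Set ℝ))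
    (hy : (y:ℝ) - 2 ∈ Set.Icc (0:ℝ) 1) (k : ℕ) : T f y k = f ⟨(y:ℝ) - 2, hy⟩ (2 * k + 1) := by
  have h := (hT f ((y:ℝ) - 2) hy).2 k
  rwa [show (⟨(y:ℝ) - 2 + 2, _⟩ :
      (Set.Icc (0:ℝ) 1 ∪ Set.Icc (2:ℝ) 3 : Set ℝ)) = y from Subtype.ext (by ring)] at h

lemma norm_T_diff_low (hT : HypT T) (f) (y y' : (Set.Icc (0:ℝ) 1 ∪ Set.Icc (2:ℝ) 3 : Set ℝ))
    (hy : (y:ℝ) ∈ Set.Icc (0:ℝ) 1) (hy' : (y':ℝ) ∈ Set.Icc (0:ℝ) 1) :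
    ‖T f y - T f y'‖ ≤ ‖f ⟨y, hy⟩ - f ⟨y', hy'⟩‖ := by
  apply norm_le_of _ (norm_nonneg _)
  intro k
  have h : (T f y - T f y') k = (f ⟨y, hy⟩ - f ⟨y', hy'⟩) (2 * k) := by
    simp only [ZeroAtInftyContinuousMap.sub_apply]
    rw [Tlow hT f y hy k, Tlow hT f y' hy' k]
  rw [h]; exact coord_le _ _

lemma norm_T_diff_high (hT : HypT T) (f) (y y' : (Set.Icc (0:ℝ) 1 ∪ Set.Icc (2:ℝ) 3 : Set ℝ))
    (hy : (y:ℝ) - 2 ∈ Set.Icc (0:ℝ) 1) (hy' : (y':ℝ) - 2 ∈ Set.Icc (0:ℝ) 1) :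
    ‖T f y - T f y'‖ ≤ ‖f ⟨(y:ℝ) - 2, hy⟩ - f ⟨(y':ℝ) - 2, hy'⟩‖ := by
  apply norm_le_of _ (norm_nonneg _)
  intro k
  have h : (T f y - T f y') k = (f ⟨(y:ℝ) - 2, hy⟩ - f ⟨(y':ℝ) - 2, hy'⟩) (2 * k + 1) := by
    simp only [ZeroAtInftyContinuousMap.sub_apply]
    rw [Thigh hT f y hy k, Thigh hT f y' hy' k]
  rw [h]; exact coord_le _ _

lemma norm_T_le (hT : HypT T) (f) (y : (Set.Icc (0:ℝ) 1 ∪ Set.Icc (2:ℝ) 3 : Set ℝ)) :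
    ∃ x : (Set.Icc (0:ℝ) 1), ‖T f y‖ ≤ ‖f x‖ := by
  by_cases h : (y:ℝ) ≤ 1
  · refine ⟨⟨y, mem_low y.2 h⟩, norm_le_of _ (norm_nonneg _) fun k => ?_⟩
    rw [Tlow hT f y (mem_low y.2 h) k]; exact coord_le _ _
  · refine ⟨⟨(y:ℝ) - 2, mem_high y.2 h⟩, norm_le_of _ (norm_nonneg _) fun k => ?_⟩
    rw [Thigh hT f y (mem_high y.2 h) k]; exact coord_le _ _

end Tfacts

section ACmach
open Set

lemma absCont_index {E : Type*} [NormedAddCommGroup E] {X : Set ℝ} {f : X → E}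
    (hf : AbsCont f) : ∀ ε > (0 : ℝ), ∃ δ > (0 : ℝ), ∀ (ι : Type) (_ : Fintype ι),
    ∀ a b : ι → X,
    (∀ i, (a i : ℝ) < b i) →
    (∀ i j, i ≠ j → Disjoint (Set.Ioo (a i : ℝ) (b i)) (Set.Ioo (a j : ℝ) (b j))) →
    (∑ i, ((b i : ℝ) - a i)) < δ →
    (∑ i, ‖f (b i) - f (a i)‖) < ε := by
  intro ε hε
  obtain ⟨δ, hδ0, hδ⟩ := hf ε hε
  refine ⟨δ, hδ0, fun ι inst a b hab hdis hsum => ?_⟩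
  classical
  let e := (Fintype.equivFin ι).symm
  have h1 : ∀ g : ι → ℝ, ∑ i : Fin (Fintype.card ι), g (e i) = ∑ i, g i :=
    fun g => Equiv.sum_comp e g
  have := hδ (Fintype.card ι) (fun i => a (e i)) (fun i => b (e i)) (fun i => hab (e i))
    (fun i j hij => hdis (e i) (e j) (fun h => hij (e.injective h)))
    (by rw [h1 (fun i => (b i : ℝ) - a i)]; exact hsum)
  rwa [h1 (fun i => ‖f (b i) - f (a i)‖)] at this

end ACmach

section PartC
open Set

variable {T : ((Set.Icc (0:ℝ) 1) → ZeroAtInftyContinuousMap ℕ ℝ) →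
        ((Set.Icc (0:ℝ) 1 ∪ Set.Icc (2:ℝ) 3 : Set ℝ) → ZeroAtInftyContinuousMap ℕ ℝ)}

lemma absCont_T (hT : HypT T) (f) (hf : AbsCont f) : AbsCont (T f) := by
  classical
  intro ε hε
  obtain ⟨δ, hδ0, hδ⟩ := absCont_index hf (ε/2) (half_pos hε)
  refine ⟨min δ 1, lt_min hδ0 one_pos, fun n a b hab hdis hsum => ?_⟩
  have hterm : ∀ i, (0:ℝ) ≤ (b i:ℝ) - a i := fun i => by linarith [hab i]
  have hle1 : ∀ i, ((b i:ℝ) - a i) < 1 := fun i =>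
    lt_of_le_of_lt (Finset.single_le_sum (fun j _ => hterm j) (Finset.mem_univ i))
      (lt_of_lt_of_le hsum (min_le_right _ _))
  set p : Fin n → Prop := fun i => (b i : ℝ) ≤ 1 with hp
  set s : Finset (Fin n) := Finset.univ.filter p with hs
  set s' : Finset (Fin n) := Finset.univ.filter (fun i => ¬ p i) with hs'
  have hmem_s : ∀ i ∈ s, (a i:ℝ) ∈ Set.Icc (0:ℝ) 1 ∧ (b i : ℝ) ∈ Set.Icc (0:ℝ) 1 := by
    intro i hi
    have hbi : (b i:ℝ) ≤ 1 := (Finset.mem_filter.1 hi).2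
    exact ⟨mem_low (a i).2 ((hab i).le.trans hbi), mem_low (b i).2 hbi⟩
  have hmem_s' : ∀ i ∈ s', ((a i:ℝ) - 2 ∈ Set.Icc (0:ℝ) 1) ∧ ((b i:ℝ) - 2 ∈ Set.Icc (0:ℝ) 1) := by
    intro i hi
    have hbi : ¬ (b i:ℝ) ≤ 1 := (Finset.mem_filter.1 hi).2
    have hb2 := mem_high (b i).2 hbi
    have hai : ¬ (a i:ℝ) ≤ 1 := by
      intro h
      have h1 : (0:ℝ) ≤ (b i:ℝ) - 2 := hb2.1
      linarith [hle1 i]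
    exact ⟨mem_high (a i).2 hai, hb2⟩
  let z : (Set.Icc (0:ℝ) 1) := ⟨0, Set.left_mem_Icc.2 (by norm_num)⟩
  let A1 : Fin n → (Set.Icc (0:ℝ) 1) := fun i => if h : i ∈ s then ⟨a i, (hmem_s i h).1⟩ else z
  let B1 : Fin n → (Set.Icc (0:ℝ) 1) := fun i => if h : i ∈ s then ⟨b i, (hmem_s i h).2⟩ else z
  let A2 : Fin n → (Set.Icc (0:ℝ) 1) :=
    fun i => if h : i ∈ s' then ⟨(a i:ℝ) - 2, (hmem_s' i h).1⟩ else z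
  let B2 : Fin n → (Set.Icc (0:ℝ) 1) :=
    fun i => if h : i ∈ s' then ⟨(b i:ℝ) - 2, (hmem_s' i h).2⟩ else z
  have hA1 : ∀ i (h : i ∈ s), (A1 i : ℝ) = a i := fun i h => by simp [A1, dif_pos h]
  have hB1 : ∀ i (h : i ∈ s), (B1 i : ℝ) = b i := fun i h => by simp [B1, dif_pos h]
  have hA2 : ∀ i (h : i ∈ s'), (A2 i : ℝ) = (a i:ℝ) - 2 := fun i h => by simp [A2, dif_pos h]
  have hB2 : ∀ i (h : i ∈ s'), (B2 i : ℝ) = (b i:ℝ) - 2 := fun i h => by simp [B2, dif_pos h]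
  have hsub : ∀ (t : Finset (Fin n)) (g : Fin n → ℝ), (∀ i, 0 ≤ g i) →
      ∑ i ∈ t, g i ≤ ∑ i, g i := fun t g hg =>
    Finset.sum_le_sum_of_subset_of_nonneg (Finset.subset_univ t) (fun i _ _ => hg i)
  -- first application
  have H1 : ∑ i : {i // i ∈ s}, ‖T f (b i) - T f (a i)‖ < ε/2 := by
    calc ∑ i : {i // i ∈ s}, ‖T f (b i.1) - T f (a i.1)‖
        ≤ ∑ i : {i // i ∈ s}, ‖f (B1 i.1) - f (A1 i.1)‖ := by
          apply Finset.sum_le_sum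
          intro i _
          have h := norm_T_diff_low hT f (b i.1) (a i.1) (hmem_s i.1 i.2).2 (hmem_s i.1 i.2).1
          convert h using 3
          · rfl
          all_goals simp [A1, B1, dif_pos i.2]
      _ < ε/2 := by
          apply hδ {i // i ∈ s} _ (fun i => A1 i.1) (fun i => B1 i.1)
          · intro i; rw [hA1 i.1 i.2, hB1 i.1 i.2]; exact hab i.1
          · intro i j hij
            rw [hA1 i.1 i.2, hB1 i.1 i.2, hA1 j.1 j.2, hB1 j.1 j.2]
            exact hdis i.1 j.1 (fun h => hij (Subtype.ext h))
          · have he : ∀ i : {i // i ∈ s}, ((B1 i.1 : ℝ) - A1 i.1) = (b i.1 : ℝ) - a i.1 :=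
              fun i => by rw [hA1 i.1 i.2, hB1 i.1 i.2]
            calc ∑ i : {i // i ∈ s}, ((B1 i.1 : ℝ) - A1 i.1)
                = ∑ i ∈ s, ((b i:ℝ) - a i) := by
                  rw [Finset.sum_congr rfl (fun i _ => he i)]
                  exact Finset.sum_coe_sort s (fun i => (b i:ℝ) - a i)
              _ ≤ ∑ i, ((b i:ℝ) - a i) := hsub s _ hterm
              _ < min δ 1 := hsum
              _ ≤ δ := min_le_left _ _
  have H2 : ∑ i : {i // i ∈ s'}, ‖T f (b i) - T f (a i)‖ < ε/2 := by
    calc ∑ i : {i // i ∈ s'}, ‖T f (b i.1) - T f (a i.1)‖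
        ≤ ∑ i : {i // i ∈ s'}, ‖f (B2 i.1) - f (A2 i.1)‖ := by
          apply Finset.sum_le_sum
          intro i _
          have h := norm_T_diff_high hT f (b i.1) (a i.1) (hmem_s' i.1 i.2).2 (hmem_s' i.1 i.2).1
          convert h using 3
          · rfl
          all_goals simp [A2, B2, dif_pos i.2]
      _ < ε/2 := by
          apply hδ {i // i ∈ s'} _ (fun i => A2 i.1) (fun i => B2 i.1)
          · intro i; rw [hA2 i.1 i.2, hB2 i.1 i.2]; simpa using hab i.1
          · intro i j hij
            rw [hA2 i.1 i.2, hB2 i.1 i.2, hA2 j.1 j.2, hB2 j.1 j.2]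
            have hd := hdis i.1 j.1 (fun h => hij (Subtype.ext h))
            rw [Set.disjoint_left] at hd ⊢
            intro x hx hx'
            exact hd (a := x + 2) (by constructor <;> [linarith [hx.1]; linarith [hx.2]])
              (by constructor <;> [linarith [hx'.1]; linarith [hx'.2]])
          · have he : ∀ i : {i // i ∈ s'}, ((B2 i.1 : ℝ) - A2 i.1) = (b i.1 : ℝ) - a i.1 :=
              fun i => by rw [hA2 i.1 i.2, hB2 i.1 i.2]; ring
            calc ∑ i : {i // i ∈ s'}, ((B2 i.1 : ℝ) - A2 i.1)
                = ∑ i ∈ s', ((b i:ℝ) - a i) := by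
                  rw [Finset.sum_congr rfl (fun i _ => he i)]
                  exact Finset.sum_coe_sort s' (fun i => (b i:ℝ) - a i)
              _ ≤ ∑ i, ((b i:ℝ) - a i) := hsub s' _ hterm
              _ < min δ 1 := hsum
              _ ≤ δ := min_le_left _ _
  have hsplit : ∑ i, ‖T f (b i) - T f (a i)‖ =
      (∑ i ∈ s, ‖T f (b i) - T f (a i)‖) + ∑ i ∈ s', ‖T f (b i) - T f (a i)‖ := by
    rw [hs, hs']
    exact (Finset.sum_filter_add_sum_filter_not Finset.univ p _).symm
  rw [hsplit, ← Finset.sum_coe_sort s (fun i => ‖T f (b i) - T f (a i)‖),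
    ← Finset.sum_coe_sort s' (fun i => ‖T f (b i) - T f (a i)‖)]
  linarith [H1, H2]

end PartC

section PartD
open Set

variable {T : ((Set.Icc (0:ℝ) 1) → ZeroAtInftyContinuousMap ℕ ℝ) →
        ((Set.Icc (0:ℝ) 1 ∪ Set.Icc (2:ℝ) 3 : Set ℝ) → ZeroAtInftyContinuousMap ℕ ℝ)}

lemma interleave_diff_norm (u v u' v' : E0) :
    ‖interleave u v - interleave u' v'‖ ≤ ‖u - u'‖ + ‖v - v'‖ := by
  apply norm_le_of _ (by positivity)
  intro k
  rw [ZeroAtInftyContinuousMap.sub_apply]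
  rcases Nat.even_or_odd k with ⟨m, hm⟩ | ⟨m, hm⟩
  · have hk : k = 2 * m := by omega
    rw [hk, interleave_even, interleave_even, ← ZeroAtInftyContinuousMap.sub_apply]
    exact (coord_le _ _).trans (le_add_of_nonneg_right (norm_nonneg _))
  · have hk : k = 2 * m + 1 := by omega
    rw [hk, interleave_odd, interleave_odd, ← ZeroAtInftyContinuousMap.sub_apply]
    exact (coord_le _ _).trans (le_add_of_nonneg_left (norm_nonneg _))

/-- inverse of T -/
def invMap (g : (Set.Icc (0:ℝ) 1 ∪ Set.Icc (2:ℝ) 3 : Set ℝ) → ZeroAtInftyContinuousMap ℕ ℝ) :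
    (Set.Icc (0:ℝ) 1) → ZeroAtInftyContinuousMap ℕ ℝ := fun x =>
  interleave (g ⟨x.1, Set.mem_union_left _ x.2⟩) (g ⟨x.1 + 2, mem_shift x.2⟩)

lemma T_invMap (hT : HypT T) (g) : T (invMap g) = g := by
  funext y
  ext k
  by_cases h : (y:ℝ) ≤ 1
  · rw [Tlow hT _ y (mem_low y.2 h) k]
    show interleave _ _ (2 * k) = g y k
    rw [interleave_even]
  · rw [Thigh hT _ y (mem_high y.2 h) k]
    show interleave _ _ (2 * k + 1) = g y k
    rw [interleave_odd]
    exact congrArg (fun z => g z k) (Subtype.ext (by ring))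

lemma absCont_invMap (g) (hg : AbsCont g) : AbsCont (invMap g) := by
  intro ε hε
  obtain ⟨δ, hδ0, hδ⟩ := absCont_index hg ε hε
  refine ⟨δ/2, half_pos hδ0, fun n a b hab hdis hsum => ?_⟩
  let A : Fin n ⊕ Fin n → (Set.Icc (0:ℝ) 1 ∪ Set.Icc (2:ℝ) 3 : Set ℝ) :=
    Sum.elim (fun i => ⟨a i, Set.mem_union_left _ (a i).2⟩)
      (fun i => ⟨(a i:ℝ) + 2, mem_shift (a i).2⟩)
  let B : Fin n ⊕ Fin n → (Set.Icc (0:ℝ) 1 ∪ Set.Icc (2:ℝ) 3 : Set ℝ) :=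
    Sum.elim (fun i => ⟨b i, Set.mem_union_left _ (b i).2⟩)
      (fun i => ⟨(b i:ℝ) + 2, mem_shift (b i).2⟩)
  have key : ∑ i : Fin n ⊕ Fin n, ‖g (B i) - g (A i)‖ < ε := by
    apply hδ _ _ A B
    · rintro (i | i)
      · exact hab i
      · show (a i:ℝ) + 2 < (b i:ℝ) + 2
        linarith [hab i]
    · rintro (i | i) (j | j) hij
      · exact hdis i j (fun h => hij (by rw [h]))
      · show Disjoint (Set.Ioo (a i:ℝ) (b i)) (Set.Ioo ((a j:ℝ)+2) ((b j:ℝ)+2))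
        rw [Set.disjoint_left]
        intro x hx hx'
        have h1 : x ≤ 1 := le_of_lt (lt_of_lt_of_le hx.2 (b i).2.2)
        have h2 : (2:ℝ) ≤ x := le_of_lt (lt_of_le_of_lt (by linarith [(a j).2.1]) hx'.1)
        linarith
      · show Disjoint (Set.Ioo ((a i:ℝ)+2) ((b i:ℝ)+2)) (Set.Ioo (a j:ℝ) (b j))
        rw [Set.disjoint_left]
        intro x hx hx'
        have h1 : x ≤ 1 := le_of_lt (lt_of_lt_of_le hx'.2 (b j).2.2)
        have h2 : (2:ℝ) ≤ x := le_of_lt (lt_of_le_of_lt (by linarith [(a i).2.1]) hx.1)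
        linarith
      · have hij' : i ≠ j := fun h => hij (by rw [h])
        have hd := hdis i j hij'
        show Disjoint (Set.Ioo ((a i:ℝ)+2) ((b i:ℝ)+2)) (Set.Ioo ((a j:ℝ)+2) ((b j:ℝ)+2))
        rw [Set.disjoint_left] at hd ⊢
        intro x hx hx'
        exact hd (a := x - 2) ⟨by linarith [hx.1], by linarith [hx.2]⟩
          ⟨by linarith [hx'.1], by linarith [hx'.2]⟩
    · rw [Fintype.sum_sum_type]
      have e1 : ∑ i : Fin n, ((B (Sum.inl i) : ℝ) - A (Sum.inl i)) = ∑ i, ((b i:ℝ) - a i) := rfl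
      have e2 : ∑ i : Fin n, ((B (Sum.inr i) : ℝ) - A (Sum.inr i)) = ∑ i, ((b i:ℝ) - a i) := by
        apply Finset.sum_congr rfl; intro i _; show (b i:ℝ) + 2 - ((a i:ℝ) + 2) = _; ring
      rw [e1, e2]
      linarith
  rw [Fintype.sum_sum_type] at key
  have hpt : ∀ i : Fin n, ‖invMap g (b i) - invMap g (a i)‖ ≤
      ‖g (B (Sum.inl i)) - g (A (Sum.inl i))‖ + ‖g (B (Sum.inr i)) - g (A (Sum.inr i))‖ :=
    fun i => interleave_diff_norm _ _ _ _
  calc ∑ i, ‖invMap g (b i) - invMap g (a i)‖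
      ≤ ∑ i : Fin n, (‖g (B (Sum.inl i)) - g (A (Sum.inl i))‖ +
        ‖g (B (Sum.inr i)) - g (A (Sum.inr i))‖) := Finset.sum_le_sum (fun i _ => hpt i)
    _ = (∑ i : Fin n, ‖g (B (Sum.inl i)) - g (A (Sum.inl i))‖) +
        ∑ i : Fin n, ‖g (B (Sum.inr i)) - g (A (Sum.inr i))‖ := Finset.sum_add_distrib
    _ < ε := key

lemma exists_unique_pre (hT : HypT T) (g) (hg : AbsCont g) :
    ∃! f, AbsCont f ∧ T f = g := by
  refine ⟨invMap g, ⟨absCont_invMap g hg, T_invMap hT g⟩, ?_⟩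
  rintro f' ⟨hf', hTf'⟩
  funext x
  ext k
  rcases Nat.even_or_odd k with ⟨m, hm⟩ | ⟨m, hm⟩
  · have hk : k = 2 * m := by omega
    have hy : ((⟨x.1, Set.mem_union_left _ x.2⟩ :
        (Set.Icc (0:ℝ) 1 ∪ Set.Icc (2:ℝ) 3 : Set ℝ)) : ℝ) ∈ Set.Icc (0:ℝ) 1 := x.2
    have h1 := Tlow hT f' _ hy m
    rw [hTf'] at h1
    have h2 : (⟨_, hy⟩ : (Set.Icc (0:ℝ) 1)) = x := Subtype.ext rfl
    rw [h2] at h1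
    rw [hk, ← h1]
    show g _ m = interleave _ _ (2 * m)
    rw [interleave_even]
  · have hk : k = 2 * m + 1 := by omega
    have hy : ((⟨x.1 + 2, mem_shift x.2⟩ :
        (Set.Icc (0:ℝ) 1 ∪ Set.Icc (2:ℝ) 3 : Set ℝ)) : ℝ) - 2 ∈ Set.Icc (0:ℝ) 1 := by
      simp only [add_sub_cancel_right]
      exact x.2
    have h1 := Thigh hT f' _ hy m
    rw [hTf'] at h1
    have h2 : (⟨_, hy⟩ : (Set.Icc (0:ℝ) 1)) = x := Subtype.ext (by simp)
    rw [h2] at h1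
    rw [hk, ← h1]
    show g _ m = interleave _ _ (2 * m + 1)
    rw [interleave_odd]

end PartD

section VarMach
open Set Finset

variable {E : Type*} [NormedAddCommGroup E]

lemma tele_sum {X : Set ℝ} {n : ℕ} (x : Fin (n+1) → X) :
    ∑ i : Fin n, ((x i.succ : ℝ) - x i.castSucc) = (x (Fin.last n) : ℝ) - x 0 := by
  set g : ℕ → ℝ := fun m => (x ⟨min m n, by omega⟩ : ℝ) with hg
  have h1 : ∀ i : Fin n, ((x i.succ : ℝ) - x i.castSucc) = g (i.val + 1) - g i.val := by
    intro i
    have hi := i.isLt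
    have e1 : x i.succ = x ⟨min (i.val+1) n, by omega⟩ :=
      congrArg x (Fin.ext (by simp only [Fin.val_succ]; omega))
    have e2 : x i.castSucc = x ⟨min i.val n, by omega⟩ :=
      congrArg x (Fin.ext (by simp only [Fin.coe_castSucc]; omega))
    rw [e1, e2]
  rw [Finset.sum_congr rfl (fun i _ => h1 i),
    Fin.sum_univ_eq_sum_range (fun m => g (m+1) - g m) n, Finset.sum_range_sub g n]
  have e3 : g n = (x (Fin.last n) : ℝ) := congrArg (fun z => (x z : ℝ)) (Fin.ext (by simp))
  have e4 : g 0 = (x 0 : ℝ) := congrArg (fun z => (x z : ℝ)) (Fin.ext (by simp))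
  rw [e3, e4]

lemma consecutive_disjoint {X : Set ℝ} {n : ℕ} {x : Fin (n+1) → X}
    (hx : StrictMono fun i => (x i : ℝ)) (i j : Fin n) (hij : i ≠ j) :
    Disjoint (Set.Ioo (x i.castSucc : ℝ) (x i.succ)) (Set.Ioo (x j.castSucc : ℝ) (x j.succ)) := by
  have key : ∀ i j : Fin n, i < j →
      Disjoint (Set.Ioo (x i.castSucc : ℝ) (x i.succ)) (Set.Ioo (x j.castSucc : ℝ) (x j.succ)) := by
    intro i j hij
    rw [Set.disjoint_left]
    intro t ht ht'
    have h1 : (x i.succ : ℝ) ≤ x j.castSucc := hx.monotone (show i.succ ≤ j.castSucc by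
      rw [Fin.le_def]
      simp only [Fin.val_succ, Fin.coe_castSucc]
      exact Fin.lt_def.1 hij)
    linarith [ht.2, ht'.1]
  rcases lt_or_gt_of_ne hij with h | h
  · exact key i j h
  · exact (key j i h).symm

lemma strictMono_const {X : Set ℝ} (x₀ : X) : StrictMono fun i : Fin 1 => ((fun _ => x₀) i : ℝ) :=
  fun i j h => absurd (Fin.lt_def.1 h) (by omega)

lemma zero_mem_partSums {X : Set ℝ} (f : X → E) (x₀ : X) : (0:ℝ) ∈ PartSums f :=
  ⟨0, fun _ => x₀, strictMono_const x₀, by simp⟩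

lemma absCont_uniform {X : Set ℝ} {f : X → E} (hf : AbsCont f) :
    ∀ ε > (0:ℝ), ∃ δ > (0:ℝ), ∀ p q : X, (p:ℝ) < q → (q:ℝ) - p < δ → ‖f q - f p‖ < ε := by
  intro ε hε
  obtain ⟨δ, hδ0, hδ⟩ := hf ε hε
  refine ⟨δ, hδ0, fun p q hpq hd => ?_⟩
  have := hδ 1 (fun _ => p) (fun _ => q) (fun _ => hpq)
    (fun i j hij => absurd (Subsingleton.elim i j) hij) (by simpa using hd)
  simpa using this

lemma absCont_continuous {X : Set ℝ} {f : X → E} (hf : AbsCont f) : Continuous f := by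
  rw [Metric.continuous_iff]
  intro x ε hε
  obtain ⟨δ, hδ0, hδ⟩ := absCont_uniform hf ε hε
  refine ⟨δ, hδ0, fun y hxy => ?_⟩
  have hd : |(y:ℝ) - x| < δ := by rwa [Subtype.dist_eq, Real.dist_eq] at hxy
  rcases lt_trichotomy ((y:ℝ)) ((x:ℝ)) with h | h | h
  · have := hδ y x h (by rw [abs_sub_comm] at hd; rw [abs_of_pos (by linarith)] at hd; linarith)
    rw [dist_eq_norm, norm_sub_rev (f y) (f x)]
    exact this
  · have : y = x := Subtype.ext h
    rw [this]; simpa using hε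
  · have := hδ x y h (by rw [abs_of_pos (by linarith)] at hd; linarith)
    rw [dist_eq_norm]
    exact this

lemma bounded_of_absCont {X : Set ℝ} (hX : IsCompact X) (hne : X.Nonempty) {f : X → E}
    (hf : AbsCont f) : ∃ M : ℝ, 0 ≤ M ∧ ∀ x, ‖f x‖ ≤ M := by
  have : CompactSpace X := isCompact_iff_compactSpace.1 hX
  have hc : Continuous fun x : X => ‖f x‖ := (absCont_continuous hf).norm
  obtain ⟨M, hM⟩ := (isCompact_range hc).bddAbove
  have hx₀ : X := ⟨hne.choose, hne.choose_spec⟩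
  refine ⟨M, le_trans (norm_nonneg (f hx₀)) (hM ⟨hx₀, rfl⟩), fun x => hM ⟨x, rfl⟩⟩

end VarMach

section BddVar
open Set Finset

variable {E : Type*} [NormedAddCommGroup E]

lemma partSums_bddAbove {f : (Set.Icc (0:ℝ) 1) → E} (hf : AbsCont f) {M : ℝ} (hM0 : 0 ≤ M)
    (hM : ∀ x, ‖f x‖ ≤ M) : BddAbove (PartSums f) := by
  classical
  obtain ⟨δ, hδ0, hδ⟩ := hf 1 one_pos
  set δ' := min δ 1 with hδ'def
  have hδ'0 : 0 < δ' := lt_min hδ0 one_pos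
  have hδ'δ : δ' ≤ δ := min_le_left _ _
  have main : ∀ k n : ℕ, ∀ x : Fin (n+1) → (Set.Icc (0:ℝ) 1),
      StrictMono (fun i => (x i : ℝ)) → (x (Fin.last n) : ℝ) - x 0 ≤ k * δ' →
      ∑ i : Fin n, ‖f (x i.succ) - f (x i.castSucc)‖ ≤ k * (1 + 2*M) + 1 := by
    intro k
    induction k with
    | zero =>
      intro n x hx hspan
      cases n with
      | zero => simp
      | succ m =>
        exfalso
        have h0 := hx (show (0 : Fin (m+2)) < Fin.last (m+1) by
          rw [Fin.lt_def]; simp)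
        simp only [Nat.cast_zero, zero_mul] at hspan
        change (x 0 : ℝ) < x (Fin.last (m+1)) at h0
        linarith
    | succ k ih =>
      intro n x hx hspan
      by_cases hall : ∀ j : Fin (n+1), (x j : ℝ) - x 0 < δ'
      · have h := hδ n (fun i => x i.castSucc) (fun i => x i.succ)
          (fun i => hx (Fin.castSucc_lt_succ (i := i))) (fun i j hij => consecutive_disjoint hx i j hij)
          (by rw [tele_sum x]; exact lt_of_lt_of_le (hall (Fin.last n)) hδ'δ)
        have hk : (0:ℝ) ≤ (k+1 : ℕ) * (1 + 2*M) := by positivity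
        push_cast at hk ⊢
        linarith
      · push_neg at hall
        obtain ⟨j, hj⟩ := hall
        have hP : ∃ m : ℕ, ∃ h : m < n+1, δ' ≤ (x ⟨m, h⟩ : ℝ) - x 0 := by
          refine ⟨j.val, j.isLt, ?_⟩
          rwa [show (⟨j.val, j.isLt⟩ : Fin (n+1)) = j from Fin.ext rfl]
        have H : ∃ j₀ : ℕ, (∃ h : j₀ < n+1, δ' ≤ (x ⟨j₀, h⟩ : ℝ) - x 0) ∧
            ∀ m, m < j₀ → ∀ h : m < n+1, (x ⟨m, h⟩ : ℝ) - x 0 < δ' :=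
          ⟨Nat.find hP, Nat.find_spec hP, fun m hm h => by
            have := Nat.find_min hP hm
            push_neg at this
            exact this h⟩
        obtain ⟨j₀, ⟨hj₀lt, hj₀⟩, hmin⟩ := H
        have hj₀pos : 1 ≤ j₀ := by
          by_contra h
          push_neg at h
          have h0 : j₀ = 0 := by omega
          subst h0
          rw [show (⟨0, hj₀lt⟩ : Fin (n+1)) = 0 from Fin.ext rfl] at hj₀
          linarith
        set p := j₀ - 1 with hpdef
        have hp : p + 1 = j₀ := by omega
        have hpn : p < n := by omega
        -- the ℕ-indexed term function
        set C : ℕ → ℝ := fun m =>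
          if h : m < n then ‖f (x ⟨m+1, by omega⟩) - f (x ⟨m, by omega⟩)‖ else 0 with hC
        have hCnn : ∀ m, 0 ≤ C m := by
          intro m
          by_cases h : m < n
          · simp only [hC]; rw [dif_pos h]; exact norm_nonneg _
          · simp only [hC]; rw [dif_neg h]
        have hCsum : ∑ i : Fin n, ‖f (x i.succ) - f (x i.castSucc)‖ = ∑ m ∈ Finset.range n, C m := by
          rw [← Fin.sum_univ_eq_sum_range C n]
          refine Finset.sum_congr rfl (fun i _ => ?_)
          simp only [hC]
          rw [dif_pos i.isLt]
          exact congrArg₂ (fun u v => ‖f u - f v‖)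
            (congrArg x (Fin.ext rfl)) (congrArg x (Fin.ext rfl))
        -- prefix partition
        have hppf : ∀ m : ℕ, m ≤ p → m < n + 1 := by omega
        set y : Fin (p+1) → (Set.Icc (0:ℝ) 1) := fun i => x ⟨i.val, by omega⟩ with hy
        have hymono : StrictMono (fun i => (y i : ℝ)) := by
          intro i1 i2 h
          exact hx (show (⟨i1.val, by omega⟩ : Fin (n+1)) < ⟨i2.val, by omega⟩ from
            Fin.mk_lt_mk.2 (Fin.lt_def.1 h))
        have hpre : ∑ i : Fin p, ‖f (y i.succ) - f (y i.castSucc)‖ < 1 := by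
          apply hδ p (fun i => y i.castSucc) (fun i => y i.succ)
            (fun i => hymono (Fin.castSucc_lt_succ (i := i)))
            (fun i j hij => consecutive_disjoint hymono i j hij)
          rw [tele_sum y]
          have e1 : y (Fin.last p) = x ⟨p, by omega⟩ := rfl
          have e2 : y 0 = x 0 := congrArg x (Fin.ext rfl)
          rw [e1, e2]
          exact lt_of_lt_of_le (hmin p (by omega) (by omega)) hδ'δ
        have hps : ∑ m ∈ Finset.range p, C m = ∑ i : Fin p, ‖f (y i.succ) - f (y i.castSucc)‖ := by
          rw [← Fin.sum_univ_eq_sum_range C p]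
          refine Finset.sum_congr rfl (fun i _ => ?_)
          simp only [hC, hy]
          rw [dif_pos (show i.val < n by omega)]
          exact congrArg₂ (fun u v => ‖f u - f v‖)
            (congrArg x (Fin.ext rfl)) (congrArg x (Fin.ext rfl))
        -- cross term
        have hcross : C p ≤ 2 * M := by
          simp only [hC]
          rw [dif_pos hpn]
          exact (norm_sub_le _ _).trans (by linarith [hM (x ⟨p+1, by omega⟩), hM (x ⟨p, by omega⟩)])
        -- tail partition
        set z : Fin (n - j₀ + 1) → (Set.Icc (0:ℝ) 1) := fun i => x ⟨j₀ + i.val, by omega⟩ with hz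
        have hzmono : StrictMono (fun i => (z i : ℝ)) := by
          intro i1 i2 h
          exact hx (show (⟨j₀ + i1.val, by omega⟩ : Fin (n+1)) < ⟨j₀ + i2.val, by omega⟩ from
            Fin.mk_lt_mk.2 (by have := Fin.lt_def.1 h; omega))
        have hzspan : (z (Fin.last (n - j₀)) : ℝ) - z 0 ≤ k * δ' := by
          have e1 : z (Fin.last (n - j₀)) = x (Fin.last n) :=
            congrArg x (Fin.ext (by simp [Fin.val_last]; omega))
          have e2 : z 0 = x ⟨j₀, hj₀lt⟩ := congrArg x (Fin.ext (by simp))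
          rw [e1, e2]
          push_cast at hspan
          linarith
        have htail := ih (n - j₀) z hzmono hzspan
        have hts : ∑ m ∈ Finset.Ico j₀ n, C m =
            ∑ i : Fin (n - j₀), ‖f (z i.succ) - f (z i.castSucc)‖ := by
          rw [Finset.sum_Ico_eq_sum_range, ← Fin.sum_univ_eq_sum_range (fun m => C (j₀ + m)) (n - j₀)]
          refine Finset.sum_congr rfl (fun i _ => ?_)
          have hlt : j₀ + i.val < n := by omega
          simp only [hC, hz]
          rw [dif_pos hlt]
          exact congrArg₂ (fun u v => ‖f u - f v‖)
            (congrArg x (Fin.ext (by simp [Fin.val_succ]; try omega)))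
            (congrArg x (Fin.ext (by simp [Fin.coe_castSucc]; try omega)))
        -- combine
        rw [hCsum]
        have hsplit : ∑ m ∈ Finset.range n, C m =
            (∑ m ∈ Finset.range j₀, C m) + ∑ m ∈ Finset.Ico j₀ n, C m := by
          rw [Finset.range_eq_Ico,
            ← Finset.sum_Ico_consecutive C (Nat.zero_le j₀) (show j₀ ≤ n by omega),
            ← Finset.range_eq_Ico]
        have hsplit2 : ∑ m ∈ Finset.range j₀, C m = (∑ m ∈ Finset.range p, C m) + C p := by
          rw [← hp, Finset.sum_range_succ]
        rw [hsplit, hsplit2, hps, hts]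
        have hexp : ((k:ℝ)+1)*(1+2*M)+1 = (k:ℝ)*(1+2*M) + 1 + (2*M) + 1 := by ring
        push_cast at htail ⊢
        rw [hexp]
        linarith [hpre, hcross, htail]
  refine ⟨(⌈1/δ'⌉₊ : ℝ) * (1 + 2*M) + 1, fun s hs => ?_⟩
  obtain ⟨n, x, hx, rfl⟩ := hs
  apply main ⌈1/δ'⌉₊ n x hx
  have h1 : (x (Fin.last n) : ℝ) ≤ 1 := (x _).2.2
  have h0 : (0:ℝ) ≤ x 0 := (x 0).2.1
  have hce : (1:ℝ) ≤ (⌈1/δ'⌉₊ : ℝ) * δ' := by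
    have h := Nat.le_ceil (1/δ')
    calc (1:ℝ) = (1/δ') * δ' := by field_simp
      _ ≤ (⌈1/δ'⌉₊ : ℝ) * δ' := mul_le_mul_of_nonneg_right h hδ'0.le
  linarith

end BddVar

section VarT
open Set Finset

variable {T : ((Set.Icc (0:ℝ) 1) → ZeroAtInftyContinuousMap ℕ ℝ) →
        ((Set.Icc (0:ℝ) 1 ∪ Set.Icc (2:ℝ) 3 : Set ℝ) → ZeroAtInftyContinuousMap ℕ ℝ)}

lemma varT_bound (hT : HypT T) (f) {M V : ℝ} (hM0 : 0 ≤ M) (hM : ∀ x, ‖f x‖ ≤ M)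
    (hV : ∀ s ∈ PartSums f, s ≤ V) (hV0 : 0 ≤ V) :
    ∀ s ∈ PartSums (T f), s ≤ 2*V + 2*M := by
  classical
  rintro s ⟨n, y, hy, rfl⟩
  by_cases hall : ∀ j : Fin (n+1), (y j : ℝ) ≤ 1
  · set x : Fin (n+1) → (Set.Icc (0:ℝ) 1) :=
      fun j => ⟨y j, mem_low (y j).2 (hall j)⟩ with hxdef
    have hx : StrictMono (fun i => (x i : ℝ)) := hy
    have hbd : ∑ i : Fin n, ‖T f (y i.succ) - T f (y i.castSucc)‖
        ≤ ∑ i : Fin n, ‖f (x i.succ) - f (x i.castSucc)‖ := by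
      apply Finset.sum_le_sum
      intro i _
      exact norm_T_diff_low hT f (y i.succ) (y i.castSucc)
        (mem_low (y i.succ).2 (hall i.succ)) (mem_low (y i.castSucc).2 (hall i.castSucc))
    have := hV _ ⟨n, x, hx, rfl⟩
    linarith
  push_neg at hall
  by_cases hall2 : ∀ j : Fin (n+1), ¬ (y j : ℝ) ≤ 1
  · set x : Fin (n+1) → (Set.Icc (0:ℝ) 1) :=
      fun j => ⟨(y j : ℝ) - 2, mem_high (y j).2 (hall2 j)⟩ with hxdef
    have hx : StrictMono (fun i => (x i : ℝ)) := fun i1 i2 h =>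
      sub_lt_sub_right (hy h) 2
    have hbd : ∑ i : Fin n, ‖T f (y i.succ) - T f (y i.castSucc)‖
        ≤ ∑ i : Fin n, ‖f (x i.succ) - f (x i.castSucc)‖ := by
      apply Finset.sum_le_sum
      intro i _
      exact norm_T_diff_high hT f (y i.succ) (y i.castSucc)
        (mem_high (y i.succ).2 (hall2 i.succ)) (mem_high (y i.castSucc).2 (hall2 i.castSucc))
    have := hV _ ⟨n, x, hx, rfl⟩
    linarith
  push_neg at hall2
  obtain ⟨jhi, hjhi⟩ := hall
  obtain ⟨jlo, hjlo⟩ := hall2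
  have hP : ∃ m : ℕ, ∃ h : m < n+1, ¬ ((y ⟨m, h⟩ : ℝ) ≤ 1) := by
    refine ⟨jhi.val, jhi.isLt, ?_⟩
    rw [show (⟨jhi.val, jhi.isLt⟩ : Fin (n+1)) = jhi from Fin.ext rfl]
    linarith
  have H : ∃ j₀ : ℕ, (∃ h : j₀ < n+1, ¬ ((y ⟨j₀, h⟩ : ℝ) ≤ 1)) ∧
      ∀ m, m < j₀ → ∀ h : m < n+1, (y ⟨m, h⟩ : ℝ) ≤ 1 :=
    ⟨Nat.find hP, Nat.find_spec hP, fun m hm h => by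
      have := Nat.find_min hP hm
      push_neg at this
      exact this h⟩
  obtain ⟨j₀, ⟨hj₀lt, hj₀⟩, hmin⟩ := H
  push_neg at hj₀
  have hj₀pos : 1 ≤ j₀ := by
    by_contra h
    push_neg at h
    have h0 : j₀ = 0 := by omega
    subst h0
    have h1 : (y 0 : ℝ) ≤ (y jlo : ℝ) := hy.monotone (Fin.zero_le jlo)
    rw [show (⟨0, hj₀lt⟩ : Fin (n+1)) = 0 from Fin.ext rfl] at hj₀
    linarith
  have hhigh : ∀ m (hm : m < n+1), j₀ ≤ m → ¬ ((y ⟨m, hm⟩ : ℝ) ≤ 1) := by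
    intro m hm hle
    have := hy.monotone (show (⟨j₀, hj₀lt⟩ : Fin (n+1)) ≤ ⟨m, hm⟩ from hle)
    push_neg
    linarith
  set p := j₀ - 1 with hpdef
  have hp : p + 1 = j₀ := by omega
  have hpn : p < n := by omega
  set C : ℕ → ℝ := fun m =>
    if h : m < n then ‖T f (y ⟨m+1, by omega⟩) - T f (y ⟨m, by omega⟩)‖ else 0 with hC
  have hCsum : ∑ i : Fin n, ‖T f (y i.succ) - T f (y i.castSucc)‖
      = ∑ m ∈ Finset.range n, C m := by
    rw [← Fin.sum_univ_eq_sum_range C n]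
    refine Finset.sum_congr rfl (fun i _ => ?_)
    simp only [hC]
    rw [dif_pos i.isLt]
    exact congrArg₂ (fun u v => ‖T f u - T f v‖)
      (congrArg y (Fin.ext rfl)) (congrArg y (Fin.ext rfl))
  -- prefix
  set xlo : Fin (p+1) → (Set.Icc (0:ℝ) 1) := fun i =>
    ⟨y ⟨i.val, by omega⟩, mem_low (y ⟨i.val, by omega⟩).2 (hmin i.val (by omega) (by omega))⟩
    with hxlo
  have hxlomono : StrictMono (fun i => (xlo i : ℝ)) := fun i1 i2 h =>
    hy (Fin.mk_lt_mk.2 (Fin.lt_def.1 h))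
  have hpre : ∑ m ∈ Finset.range p, C m ≤ V := by
    refine le_trans ?_ (hV _ ⟨p, xlo, hxlomono, rfl⟩)
    rw [← Fin.sum_univ_eq_sum_range C p]
    apply Finset.sum_le_sum
    intro i _
    have e := norm_T_diff_low hT f (y ⟨i.val+1, by omega⟩) (y ⟨i.val, by omega⟩)
      (mem_low (y ⟨i.val+1, by omega⟩).2 (hmin (i.val+1) (by omega) (by omega)))
      (mem_low (y ⟨i.val, by omega⟩).2 (hmin i.val (by omega) (by omega)))
    simp only [hC]
    rw [dif_pos (show i.val < n by omega)]
    exact e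
  -- cross
  have hcross : C p ≤ 2 * M := by
    simp only [hC]
    rw [dif_pos hpn]
    obtain ⟨x1, hx1⟩ := norm_T_le hT f (y ⟨p+1, by omega⟩)
    obtain ⟨x2, hx2⟩ := norm_T_le hT f (y ⟨p, by omega⟩)
    calc ‖T f (y ⟨p+1, by omega⟩) - T f (y ⟨p, by omega⟩)‖
        ≤ ‖T f (y ⟨p+1, by omega⟩)‖ + ‖T f (y ⟨p, by omega⟩)‖ := norm_sub_le _ _
      _ ≤ 2 * M := by linarith [hx1.trans (hM x1), hx2.trans (hM x2)]
  -- tail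
  set xhi : Fin (n - j₀ + 1) → (Set.Icc (0:ℝ) 1) := fun i =>
    ⟨(y ⟨j₀ + i.val, by omega⟩ : ℝ) - 2,
      mem_high (y ⟨j₀ + i.val, by omega⟩).2 (hhigh (j₀ + i.val) (by omega) (by omega))⟩
    with hxhi
  have hxhimono : StrictMono (fun i => (xhi i : ℝ)) := fun i1 i2 h =>
    sub_lt_sub_right (hy (Fin.mk_lt_mk.2 (by have := Fin.lt_def.1 h; omega))) 2
  have htail : ∑ m ∈ Finset.Ico j₀ n, C m ≤ V := by
    refine le_trans ?_ (hV _ ⟨n - j₀, xhi, hxhimono, rfl⟩)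
    rw [Finset.sum_Ico_eq_sum_range, ← Fin.sum_univ_eq_sum_range (fun m => C (j₀ + m)) (n - j₀)]
    apply Finset.sum_le_sum
    intro i _
    have hlt : j₀ + i.val < n := by omega
    have e := norm_T_diff_high hT f (y ⟨j₀ + i.val + 1, by omega⟩) (y ⟨j₀ + i.val, by omega⟩)
      (mem_high (y ⟨j₀ + i.val + 1, by omega⟩).2 (hhigh (j₀ + i.val + 1) (by omega) (by omega)))
      (mem_high (y ⟨j₀ + i.val, by omega⟩).2 (hhigh (j₀ + i.val) (by omega) (by omega)))
    simp only [hC]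
    rw [dif_pos hlt]
    exact e
  rw [hCsum]
  have hsplit : ∑ m ∈ Finset.range n, C m =
      (∑ m ∈ Finset.range j₀, C m) + ∑ m ∈ Finset.Ico j₀ n, C m := by
    rw [Finset.range_eq_Ico,
      ← Finset.sum_Ico_consecutive C (Nat.zero_le j₀) (show j₀ ≤ n by omega),
      ← Finset.range_eq_Ico]
  have hsplit2 : ∑ m ∈ Finset.range j₀, C m = (∑ m ∈ Finset.range p, C m) + C p := by
    rw [← hp, Finset.sum_range_succ]
  rw [hsplit, hsplit2]
  linarith

end VarT

section Assemble
open Set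

variable {T : ((Set.Icc (0:ℝ) 1) → ZeroAtInftyContinuousMap ℕ ℝ) →
        ((Set.Icc (0:ℝ) 1 ∪ Set.Icc (2:ℝ) 3 : Set ℝ) → ZeroAtInftyContinuousMap ℕ ℝ)}

lemma ACnorm_bound (hT : HypT T) (f) (hf : AbsCont f) : ACnorm (T f) ≤ 3 * ACnorm f := by
  have x₀ : (Set.Icc (0:ℝ) 1) := ⟨0, Set.left_mem_Icc.2 (by norm_num)⟩
  obtain ⟨M, hM0, hM⟩ := bounded_of_absCont isCompact_Icc ⟨0, Set.left_mem_Icc.2 (by norm_num)⟩ hf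
  have hBn : BddAbove {r | ∃ x, r = ‖f x‖} := ⟨M, by rintro r ⟨x, rfl⟩; exact hM x⟩
  have hSx : ∀ x, ‖f x‖ ≤ supNorm f := fun x => le_csSup hBn ⟨x, rfl⟩
  have hS0 : 0 ≤ supNorm f := le_trans (norm_nonneg _) (hSx x₀)
  have hBp : BddAbove (PartSums f) := partSums_bddAbove hf hS0 hSx
  have hVx : ∀ s ∈ PartSums f, s ≤ var f := fun s hs => le_csSup hBp hs
  have hV0 : 0 ≤ var f := le_csSup hBp (zero_mem_partSums f x₀)
  have h1 : supNorm (T f) ≤ supNorm f := by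
    apply Real.sSup_le _ hS0
    rintro r ⟨y, rfl⟩
    obtain ⟨x, hx⟩ := norm_T_le hT f y
    exact hx.trans (hSx x)
  have h2 : var (T f) ≤ 2 * var f + 2 * supNorm f :=
    Real.sSup_le (varT_bound hT f hS0 hSx hVx hV0) (by linarith)
  show supNorm (T f) + var (T f) ≤ 3 * (supNorm f + var f)
  linarith

lemma absCont_const (c : ZeroAtInftyContinuousMap ℕ ℝ) :
    AbsCont (fun _ : (Set.Icc (0:ℝ) 1) => c) := by
  intro ε hε
  exact ⟨1, one_pos, fun n a b _ _ _ => by simpa using hε⟩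

end Assemble


/-- Example 4.1: the "odd/even splitting" operator
`T : AC([0,1], c₀) → AC([0,1] ∪ [2,3], c₀)`, `Tf(x) = (λ₁, λ₃, …)` and
`Tf(2+x) = (λ₂, λ₄, …)` for `f(x) = (λ₁, λ₂, …)`, is a linear, bijective (between the
AC spaces), separating and continuous map whose inverse is not separating. -/
theorem separating_not_biseparating_example
    (T : ((Set.Icc (0:ℝ) 1) → ZeroAtInftyContinuousMap ℕ ℝ) →
        ((Set.Icc (0:ℝ) 1 ∪ Set.Icc (2:ℝ) 3 : Set ℝ) → ZeroAtInftyContinuousMap ℕ ℝ))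
    (hT : ∀ (f : (Set.Icc (0:ℝ) 1) → ZeroAtInftyContinuousMap ℕ ℝ)
        (x : ℝ) (hx : x ∈ Set.Icc (0:ℝ) 1),
      (∀ k : ℕ, T f ⟨x, Set.mem_union_left _ hx⟩ k = f ⟨x, hx⟩ (2 * k)) ∧
      (∀ k : ℕ, T f ⟨x + 2, Set.mem_union_right _
          ⟨by linarith [hx.1], by linarith [hx.2]⟩⟩ k = f ⟨x, hx⟩ (2 * k + 1))) :
    (∀ f g, T (f + g) = T f + T g) ∧
    (∀ (c : ℝ) f, T (c • f) = c • T f) ∧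
    (∀ f, AbsCont f → AbsCont (T f)) ∧
    (∀ g, AbsCont g → ∃! f, AbsCont f ∧ T f = g) ∧
    Separating T ∧
    (∃ K : ℝ, 0 ≤ K ∧ ∀ f, AbsCont f → ACnorm (T f) ≤ K * ACnorm f) ∧
    ¬ (∀ f g, AbsCont f → AbsCont g →
        (∀ y, T f y = 0 ∨ T g y = 0) → ∀ x, f x = 0 ∨ g x = 0) := by
  have hT' : HypT T := hT
  refine ⟨?_, ?_, fun f hf => absCont_T hT' f hf, fun g hg => exists_unique_pre hT' g hg,
    ?_, ⟨3, by norm_num, fun f hf => ACnorm_bound hT' f hf⟩, ?_⟩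
  · -- additive
    intro f g
    funext y
    ext k
    by_cases h : (y:ℝ) ≤ 1
    · simp only [Pi.add_apply, ZeroAtInftyContinuousMap.add_apply,
        Tlow hT' (f + g) y (mem_low y.2 h), Tlow hT' f y (mem_low y.2 h),
        Tlow hT' g y (mem_low y.2 h)]
    · simp only [Pi.add_apply, ZeroAtInftyContinuousMap.add_apply,
        Thigh hT' (f + g) y (mem_high y.2 h), Thigh hT' f y (mem_high y.2 h),
        Thigh hT' g y (mem_high y.2 h)]
  · -- homogeneous
    intro c f
    funext y
    ext k
    by_cases h : (y:ℝ) ≤ 1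
    · simp only [Pi.smul_apply, ZeroAtInftyContinuousMap.smul_apply,
        Tlow hT' (c • f) y (mem_low y.2 h), Tlow hT' f y (mem_low y.2 h)]
    · simp only [Pi.smul_apply, ZeroAtInftyContinuousMap.smul_apply,
        Thigh hT' (c • f) y (mem_high y.2 h), Thigh hT' f y (mem_high y.2 h)]
  · -- separating
    intro f g hf hg hdisj y
    by_cases h : (y:ℝ) ≤ 1
    · rcases hdisj ⟨y, mem_low y.2 h⟩ with h0 | h0
      · left
        ext k
        rw [Tlow hT' f y (mem_low y.2 h) k, h0]
        rfl
      · right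
        ext k
        rw [Tlow hT' g y (mem_low y.2 h) k, h0]
        rfl
    · rcases hdisj ⟨(y:ℝ) - 2, mem_high y.2 h⟩ with h0 | h0
      · left
        ext k
        rw [Thigh hT' f y (mem_high y.2 h) k, h0]
        rfl
      · right
        ext k
        rw [Thigh hT' g y (mem_high y.2 h) k, h0]
        rfl
  · -- inverse not separating
    intro Hcon
    have hdisj : ∀ y, T (fun _ => eseq 0) y = 0 ∨ T (fun _ => eseq 1) y = 0 := by
      intro y
      by_cases h : (y:ℝ) ≤ 1
      · right
        ext k
        rw [Tlow hT' _ y (mem_low y.2 h) k]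
        show (if 2 * k = 1 then (1:ℝ) else 0) = (0 : ZeroAtInftyContinuousMap ℕ ℝ) k
        rw [if_neg (by omega)]
        rfl
      · left
        ext k
        rw [Thigh hT' _ y (mem_high y.2 h) k]
        show (if 2 * k + 1 = 0 then (1:ℝ) else 0) = (0 : ZeroAtInftyContinuousMap ℕ ℝ) k
        rw [if_neg (by omega)]
        rfl
    have := Hcon (fun _ => eseq 0) (fun _ => eseq 1) (absCont_const _) (absCont_const _) hdisj
      ⟨0, Set.left_mem_Icc.2 (by norm_num)⟩
    rcases this with h0 | h0
    · exact eseq_ne_zero 0 h0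
    · exact eseq_ne_zero 1 h0
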